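/- Let G = (V,→,⟷) be a topologic graph, k ∈ ℕ, c = (c_1,…,c_k) a configuration for k UAVs in G, and let G' be the extended topologic graph built from G, k and c. Let (d^0,…,d^ℓ) be a covering execution in G' with k UAVs, and let t* be the least time t such that some UAV is at s_k at time t. Then the configuration at time t* is (s_1,…,s_k) up to a permutation of the UAVs, and the configuration at time t*−1 is (c_1,…,c_k) up to a permutation of the UAVs. -/

import Mathlib

/-- A topologic graph: a finite set of regions with a base `B`, a move relation `→`
and a symmetric communication relation `⟷`, such that `B → B`. -/
structure TopGraph (V : Type) where
  base : V
  move : V → V → Prop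
  comm : V → V → Prop
  comm_symm : ∀ v w : V, comm v w → comm w v
  base_move : move base base

namespace TopGraph

variable {V : Type} {n : ℕ}

/-- The communication graph restricted to the occupied nodes together with the base is
connected: every occupied node is reachable from the base via communication edges whose
endpoints are occupied (or the base). -/
def ConnectedToBase (G : TopGraph V) (c : Fin n → V) : Prop :=
  ∀ i : Fin n,
    Relation.ReflTransGen
      (fun x y =>
        (x = G.base ∨ ∃ j, c j = x) ∧ (y = G.base ∨ ∃ j, c j = y) ∧ G.comm x y)
      G.base (c i)

/-- A configuration for `n` UAVs. -/
def IsConfig (G : TopGraph V) (c : Fin n → V) : Prop :=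
  G.ConnectedToBase c ∧ ∀ i j : Fin n, i ≠ j → c i ≠ G.base → c i ≠ c j

/-- An execution of length `ℓ` with `n` UAVs. -/
def IsExecution (G : TopGraph V) (n ℓ : ℕ) (d : ℕ → Fin n → V) : Prop :=
  (∀ t, t ≤ ℓ → G.IsConfig (d t)) ∧
  (∀ t, t < ℓ → ∀ i : Fin n, G.move (d t i) (d (t + 1) i))

/-- A covering execution: starts and ends with all UAVs at the base, and visits all nodes. -/
def IsCovering (G : TopGraph V) (n ℓ : ℕ) (d : ℕ → Fin n → V) : Prop :=
  G.IsExecution n ℓ d ∧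
  (∀ i, d 0 i = G.base) ∧ (∀ i, d ℓ i = G.base) ∧
  (∀ v : V, ∃ t, t ≤ ℓ ∧ ∃ i, d t i = v)

/-- A configuration is reachable if some execution from the all-base configuration ends in it. -/
def Reachable (G : TopGraph V) (c : Fin n → V) : Prop :=
  ∃ ℓ, ∃ d : ℕ → Fin n → V,
    G.IsExecution n ℓ d ∧ (∀ i, d 0 i = G.base) ∧ d ℓ = c

/-- Reachability by an execution of length at most `L`. -/
def ReachableIn (G : TopGraph V) (c : Fin n → V) (L : ℕ) : Prop :=
  ∃ ℓ, ℓ ≤ L ∧ ∃ d : ℕ → Fin n → V,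
    G.IsExecution n ℓ d ∧ (∀ i, d 0 i = G.base) ∧ d ℓ = c

/-- Neighbor-communicable: if a UAV can move from `v` to `v'`, then `v` and `v'` can communicate. -/
def NeighborCommunicable (G : TopGraph V) : Prop :=
  ∀ v w : V, G.move v w → G.comm v w

end TopGraph
/-! The extended topologic graph `G'` built from `G`, `k` and a configuration `c`.
Nodes: `Sum.inl u` for `u ∈ V`; `Sum.inr (Sum.inl i)` is `s_{i+1}`; `Sum.inr (Sum.inr i)` is `v_{i+1}`. -/

/-- Moves of the extended graph. -/
def extMove {V : Type} (G : TopGraph V) (k : ℕ) (c : Fin k → V) :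
    (V ⊕ (Fin k ⊕ Fin k)) → (V ⊕ (Fin k ⊕ Fin k)) → Prop := fun x y =>
  (∃ u u' : V, x = Sum.inl u ∧ y = Sum.inl u' ∧ G.move u u') ∨
  (∃ i : Fin k, x = Sum.inl (c i) ∧ y = Sum.inr (Sum.inl i)) ∨
  (∃ i : Fin k, x = Sum.inr (Sum.inl i) ∧ y = Sum.inr (Sum.inr i)) ∨
  (∃ (i : Fin k) (u : V), i.val = 0 ∧ x = Sum.inr (Sum.inr i) ∧ y = Sum.inl u) ∨
  (∃ (i : Fin k) (u : V), i.val = 0 ∧ x = Sum.inl u ∧ y = Sum.inr (Sum.inr i)) ∨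
  (∃ i : Fin k, x = Sum.inr (Sum.inr i) ∧ y = Sum.inl G.base) ∨
  (∃ i : Fin k, i.val = k - 1 ∧ x = Sum.inr (Sum.inr i) ∧ y = Sum.inr (Sum.inr i))

/-- One direction of the added communications of the extended graph. -/
def extComm0 {V : Type} (G : TopGraph V) (k : ℕ) :
    (V ⊕ (Fin k ⊕ Fin k)) → (V ⊕ (Fin k ⊕ Fin k)) → Prop := fun x y =>
  (∃ u u' : V, x = Sum.inl u ∧ y = Sum.inl u' ∧ G.comm u u') ∨
  (∃ i i' : Fin k, i'.val = i.val + 1 ∧ x = Sum.inr (Sum.inl i) ∧ y = Sum.inr (Sum.inl i')) ∨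
  (∃ i : Fin k, i.val = 0 ∧ x = Sum.inr (Sum.inl i) ∧ y = Sum.inl G.base) ∨
  (∃ i : Fin k, i.val = k - 1 ∧ x = Sum.inr (Sum.inr i))

/-- The extended topologic graph `G'` built from `G`, `k` and the configuration `c`. -/
def extGraph {V : Type} (G : TopGraph V) (k : ℕ) (c : Fin k → V) :
    TopGraph (V ⊕ (Fin k ⊕ Fin k)) where
  base := Sum.inl G.base
  move := extMove G k c
  comm := fun x y => extComm0 G k x y ∨ extComm0 G k y x
  comm_symm := fun _ _ h => h.symm
  base_move := Or.inl ⟨G.base, G.base, rfl, rfl, G.base_move⟩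
/-- in a covering execution of the extended graph `G'`, at the first time
`t*` at which some UAV is at `s_k` the configuration is `(s_1, …, s_k)` up to a
permutation, and at time `t* - 1` it is `(c_1, …, c_k)` up to a permutation. -/
theorem at_first_sk_configurations {V : Type} [Fintype V] (G : TopGraph V) (k : ℕ)
    (c : Fin k → V) (hc : G.IsConfig c)
    (ℓ : ℕ) (d : ℕ → Fin k → (V ⊕ (Fin k ⊕ Fin k)))
    (hd : (extGraph G k c).IsCovering k ℓ d)
    (tstar : ℕ) (htle : tstar ≤ ℓ)
    (hat : ∃ i j : Fin k, j.val = k - 1 ∧ d tstar i = Sum.inr (Sum.inl j))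
    (hmin : ∀ t < tstar, ¬ ∃ i j : Fin k, j.val = k - 1 ∧ d t i = Sum.inr (Sum.inl j)) :
    (∃ σ : Equiv.Perm (Fin k), ∀ i, d tstar i = Sum.inr (Sum.inl (σ i))) ∧
    (∃ σ : Equiv.Perm (Fin k), ∀ i, d (tstar - 1) i = Sum.inl (c (σ i))) := by
  obtain ⟨i0, j0, hj0, hdi0⟩ := hat
  obtain ⟨⟨hconf, hmove⟩, hstart, hend, _⟩ := hd
  have hk : 0 < k := j0.pos
  have ht1 : 0 < tstar := by
    rcases Nat.eq_zero_or_pos tstar with h | h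
    · exfalso; rw [h, hstart i0] at hdi0; simp [extGraph] at hdi0
    · exact h
  -- no UAV is at v_k at time tstar
  have hnov : ∀ i, d tstar i ≠ Sum.inr (Sum.inr j0) := by
    rcases eq_or_lt_of_le (Nat.succ_le_of_lt hk) with hk1 | hk2
    · -- k = 1
      intro i h
      have hii : i = i0 := Fin.val_injective (by omega)
      rw [hii, hdi0] at h
      simp at h
    · -- k ≥ 2
      have key : ∀ t, t ≤ tstar → ∀ i, d t i ≠ Sum.inr (Sum.inr j0) := by
        intro t
        induction t with
        | zero => intro _ i h; rw [hstart i] at h; simp [extGraph] at h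
        | succ t ih =>
          intro ht i h
          have htlt : t < tstar := Nat.lt_of_lt_of_le (Nat.lt_succ_self t) ht
          have hm := hmove t (lt_of_lt_of_le htlt htle) i
          rcases hm with ⟨u, u', hx, hy, _⟩ | ⟨m, hx, hy⟩ | ⟨m, hx, hy⟩ |
            ⟨m, u, hm0, hx, hy⟩ | ⟨m, u, hm0, hx, hy⟩ | ⟨m, hx, hy⟩ | ⟨m, hmk, hx, hy⟩
          · rw [h] at hy; simp at hy
          · rw [h] at hy; simp at hy
          · rw [h] at hy
            obtain rfl : j0 = m := by simpa using hy
            exact hmin t htlt ⟨i, j0, hj0, hx⟩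
          · rw [h] at hy; simp at hy
          · rw [h] at hy
            obtain rfl : j0 = m := by simpa using hy
            omega
          · rw [h] at hy; simp at hy
          · rw [h] at hy
            obtain rfl : j0 = m := by simpa using hy
            exact ih htlt.le i hx
      exact key tstar le_rfl
  have hconn := (hconf tstar htle).1
  -- the occupancy invariant along communication paths from the base
  have occ : ∀ x, Relation.ReflTransGen
      (fun x y => (x = (extGraph G k c).base ∨ ∃ j, d tstar j = x) ∧
        (y = (extGraph G k c).base ∨ ∃ j, d tstar j = y) ∧ (extGraph G k c).comm x y)
      (extGraph G k c).base x →
      ∀ j : Fin k, x = Sum.inr (Sum.inl j) →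
      ∀ m : Fin k, m.val ≤ j.val → ∃ i, d tstar i = Sum.inr (Sum.inl m) := by
    intro x hx
    induction hx with
    | refl => intro j hj; exact absurd hj (by simp [extGraph])
    | @tail b x' hb hstep ih =>
      intro j hj m hm
      subst hj
      obtain ⟨hbocc, hxocc, hcomm⟩ := hstep
      have hxocc' : ∃ i, d tstar i = Sum.inr (Sum.inl j) := by
        rcases hxocc with h | h
        · exact absurd h (by simp [extGraph])
        · exact h
      rcases hcomm with hc1 | hc2
      · rcases hc1 with ⟨u, u', hbu, hju, _⟩ | ⟨i1, i2, hi12, hb', hj'⟩ |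
          ⟨i1, hi1, hb', hj'⟩ | ⟨i1, hi1, hb'⟩
        · exact absurd hju (by simp)
        · obtain rfl : j = i2 := by simpa using hj'
          rcases Nat.lt_or_ge m.val j.val with hlt | hge
          · exact ih i1 hb' m (by omega)
          · obtain rfl : m = j := Fin.val_injective (by omega)
            exact hxocc'
        · exact absurd hj' (by simp)
        · rcases hbocc with h | ⟨i, hi⟩
          · rw [hb'] at h; exact absurd h (by simp [extGraph])
          · rw [hb'] at hi
            have hij : i1 = j0 := Fin.val_injective (by omega)
            rw [hij] at hi
            exact absurd hi (hnov i)
      · rcases hc2 with ⟨u, u', hju, hbu, _⟩ | ⟨i1, i2, hi12, hj', hb'⟩ |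
          ⟨i1, hi1, hj', hb'⟩ | ⟨i1, hi1, hj'⟩
        · exact absurd hju (by simp)
        · obtain rfl : j = i1 := by simpa using hj'
          exact ih i2 hb' m (by omega)
        · obtain rfl : j = i1 := by simpa using hj'
          obtain rfl : m = j := Fin.val_injective (by omega)
          exact hxocc'
        · exact absurd hj' (by simp)
  have occAll : ∀ m : Fin k, ∃ i, d tstar i = Sum.inr (Sum.inl m) := by
    intro m
    exact occ _ (hconn i0) j0 hdi0 m (by have := m.isLt; omega)
  choose w hw using occAll
  have hwinj : Function.Injective w := by
    intro m m' h
    have h1 := hw m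
    rw [h] at h1
    have h2 := h1.symm.trans (hw m')
    simpa using h2
  have hwbij : Function.Bijective w := Finite.injective_iff_bijective.mp hwinj
  let e := Equiv.ofBijective w hwbij
  have hσ : ∀ i, d tstar i = Sum.inr (Sum.inl (e.symm i)) := by
    intro i
    have hwi : w (e.symm i) = i := e.apply_symm_apply i
    have h1 := hw (e.symm i)
    rw [hwi] at h1
    exact h1
  refine ⟨⟨e.symm, hσ⟩, ⟨e.symm, ?_⟩⟩
  intro i
  have hstep := hmove (tstar - 1) (by omega) i
  have hts : tstar - 1 + 1 = tstar := by omega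
  rw [hts, hσ i] at hstep
  rcases hstep with ⟨u, u', hx, hy, _⟩ | ⟨m, hx, hy⟩ | ⟨m, hx, hy⟩ |
    ⟨m, u, hm0, hx, hy⟩ | ⟨m, u, hm0, hx, hy⟩ | ⟨m, hx, hy⟩ | ⟨m, hmk, hx, hy⟩
  · simp at hy
  · obtain rfl : e.symm i = m := by simpa using hy
    exact hx
  · simp at hy
  · simp at hy
  · simp at hy
  · simp at hy
  · simp at hy
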